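/- Let L > 0, J_T ∈ ℝ, and let σ, ω, Ω be twice continuously differentiable real functions on {(ρ,z) : ρ > 0} such that σ(ρ, z+L) = σ(ρ,z), Ω(ρ, z+L) = Ω(ρ,z), and ω(ρ, z+L) = ω(ρ,z) + 8J_T. Assume σ and ω satisfy the reduced vacuum Einstein equations Δσ = −e^{−2σ}(ω_ρ² + ω_z²)/ρ⁴ and Δω = 4ω_ρ/ρ + 2(ω_ρσ_ρ + ω_zσ_z), and that Ω satisfies the quadratures Ω_z = ρω_ρ/η² and Ω_ρ = −ρω_z/η², with η = ρ²e^σ. Define M(ρ) = (1/4)∫_{−L/2}^{L/2} (−ρ σ_ρ(ρ,z) + Ω(ρ,z) ω_z(ρ,z)) dz. Then M is constant on (0,∞): d M(ρ)/dρ = 0 for every ρ > 0. -/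

import Mathlib

/-- Partial derivative with respect to the first (ρ) variable. -/
noncomputable def pdr (f : ℝ × ℝ → ℝ) (p : ℝ × ℝ) : ℝ :=
  deriv (fun x => f (x, p.2)) p.1

/-- Partial derivative with respect to the second (z) variable. -/
noncomputable def pdz (f : ℝ × ℝ → ℝ) (p : ℝ × ℝ) : ℝ :=
  deriv (fun y => f (p.1, y)) p.2

/-- The flat cylindrically symmetric Laplacian Δ = ∂²_ρ + (1/ρ)∂_ρ + ∂²_z. -/
noncomputable def lap (f : ℝ × ℝ → ℝ) (p : ℝ × ℝ) : ℝ :=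
  pdr (pdr f) p + pdr f p / p.1 + pdz (pdz f) p

open Set Metric MeasureTheory Filter

def Uop : Set (ℝ × ℝ) := {p : ℝ × ℝ | 0 < p.1}
lemma isOpen_Uop : IsOpen Uop := isOpen_lt continuous_const continuous_fst
noncomputable def g1 (f : ℝ × ℝ → ℝ) (p : ℝ × ℝ) : ℝ := fderiv ℝ f p (1, 0)
noncomputable def g2 (f : ℝ × ℝ → ℝ) (p : ℝ × ℝ) : ℝ := fderiv ℝ f p (0, 1)

lemma contDiffOn_g1 {f : ℝ × ℝ → ℝ} (hf : ContDiffOn ℝ 2 f Uop) :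
    ContDiffOn ℝ 1 (g1 f) Uop := by
  have h := hf.fderiv_of_isOpen (m := 1) isOpen_Uop (by norm_num)
  exact ((ContinuousLinearMap.apply ℝ ℝ ((1:ℝ),(0:ℝ))).contDiff.comp_contDiffOn h :)

lemma contDiffOn_g2 {f : ℝ × ℝ → ℝ} (hf : ContDiffOn ℝ 2 f Uop) :
    ContDiffOn ℝ 1 (g2 f) Uop := by
  have h := hf.fderiv_of_isOpen (m := 1) isOpen_Uop (by norm_num)
  exact ((ContinuousLinearMap.apply ℝ ℝ ((0:ℝ),(1:ℝ))).contDiff.comp_contDiffOn h :)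

lemma continuousOn_g1 {f : ℝ × ℝ → ℝ} (hf : ContDiffOn ℝ 1 f Uop) :
    ContinuousOn (g1 f) Uop := by
  have h := hf.continuousOn_fderiv_of_isOpen isOpen_Uop le_rfl
  exact ((ContinuousLinearMap.apply ℝ ℝ ((1:ℝ),(0:ℝ))).continuous.comp_continuousOn h :)

lemma continuousOn_g2 {f : ℝ × ℝ → ℝ} (hf : ContDiffOn ℝ 1 f Uop) :
    ContinuousOn (g2 f) Uop := by
  have h := hf.continuousOn_fderiv_of_isOpen isOpen_Uop le_rfl
  exact ((ContinuousLinearMap.apply ℝ ℝ ((0:ℝ),(1:ℝ))).continuous.comp_continuousOn h :)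

lemma diffAt_of_cd1 {f : ℝ × ℝ → ℝ} (hf : ContDiffOn ℝ 1 f Uop) {p : ℝ × ℝ}
    (hp : p ∈ Uop) : DifferentiableAt ℝ f p :=
  (hf.differentiableOn one_ne_zero p hp).differentiableAt (isOpen_Uop.mem_nhds hp)

lemma diffAt_fderiv {f : ℝ × ℝ → ℝ} (hf : ContDiffOn ℝ 2 f Uop) {p : ℝ × ℝ}
    (hp : p ∈ Uop) : DifferentiableAt ℝ (fderiv ℝ f) p := by
  have h := hf.fderiv_of_isOpen (m := 1) isOpen_Uop (by norm_num)
  exact (h.differentiableOn one_ne_zero p hp).differentiableAt (isOpen_Uop.mem_nhds hp)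

lemma fderiv_g1 {f : ℝ × ℝ → ℝ} (hf : ContDiffOn ℝ 2 f Uop) {p : ℝ × ℝ} (hp : p ∈ Uop)
    (v : ℝ × ℝ) : fderiv ℝ (g1 f) p v = fderiv ℝ (fderiv ℝ f) p v (1, 0) := by
  have h : fderiv ℝ (fun q => fderiv ℝ f q ((1:ℝ), (0:ℝ))) p
      = (fderiv ℝ f p).comp (fderiv ℝ (fun _ : ℝ × ℝ => ((1:ℝ),(0:ℝ))) p)
        + (fderiv ℝ (fderiv ℝ f) p).flip ((1:ℝ),(0:ℝ)) :=
    fderiv_clm_apply (diffAt_fderiv hf hp) (differentiableAt_const _)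
  simp only [fderiv_fun_const, Pi.zero_apply, ContinuousLinearMap.comp_zero, zero_add] at h
  show fderiv ℝ (fun q => fderiv ℝ f q ((1:ℝ),(0:ℝ))) p v = _
  rw [h]; rfl

lemma fderiv_g2 {f : ℝ × ℝ → ℝ} (hf : ContDiffOn ℝ 2 f Uop) {p : ℝ × ℝ} (hp : p ∈ Uop)
    (v : ℝ × ℝ) : fderiv ℝ (g2 f) p v = fderiv ℝ (fderiv ℝ f) p v (0, 1) := by
  have h : fderiv ℝ (fun q => fderiv ℝ f q ((0:ℝ), (1:ℝ))) p
      = (fderiv ℝ f p).comp (fderiv ℝ (fun _ : ℝ × ℝ => ((0:ℝ),(1:ℝ))) p)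
        + (fderiv ℝ (fderiv ℝ f) p).flip ((0:ℝ),(1:ℝ)) :=
    fderiv_clm_apply (diffAt_fderiv hf hp) (differentiableAt_const _)
  simp only [fderiv_fun_const, Pi.zero_apply, ContinuousLinearMap.comp_zero, zero_add] at h
  show fderiv ℝ (fun q => fderiv ℝ f q ((0:ℝ),(1:ℝ))) p v = _
  rw [h]; rfl

lemma symm_g {f : ℝ × ℝ → ℝ} (hf : ContDiffOn ℝ 2 f Uop) {p : ℝ × ℝ} (hp : p ∈ Uop) :
    g2 (g1 f) p = g1 (g2 f) p := by
  have hsymm : IsSymmSndFDerivAt ℝ f p :=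
    ((hf p hp).contDiffAt (isOpen_Uop.mem_nhds hp)).isSymmSndFDerivAt (by simp [minSmoothness_of_isRCLikeNormedField])
  show fderiv ℝ (g1 f) p (0,1) = fderiv ℝ (g2 f) p (1,0)
  rw [fderiv_g1 hf hp, fderiv_g2 hf hp]
  exact hsymm (0,1) (1,0)

lemma hasDerivAt_slice1 {f : ℝ × ℝ → ℝ} {p : ℝ × ℝ} (hf : DifferentiableAt ℝ f p) :
    HasDerivAt (fun x => f (x, p.2)) (g1 f p) p.1 := by
  have h : HasDerivAt (fun x : ℝ => (x, p.2)) ((1 : ℝ), (0 : ℝ)) p.1 :=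
    (hasDerivAt_id p.1).prodMk (hasDerivAt_const _ _)
  have hf' : HasFDerivAt f (fderiv ℝ f p) (p.1, p.2) := by
    rw [Prod.mk.eta]; exact hf.hasFDerivAt
  exact hf'.comp_hasDerivAt p.1 h

lemma hasDerivAt_slice2 {f : ℝ × ℝ → ℝ} {p : ℝ × ℝ} (hf : DifferentiableAt ℝ f p) :
    HasDerivAt (fun y => f (p.1, y)) (g2 f p) p.2 := by
  have h : HasDerivAt (fun y : ℝ => (p.1, y)) ((0 : ℝ), (1 : ℝ)) p.2 :=
    (hasDerivAt_const _ _).prodMk (hasDerivAt_id p.2)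
  have hf' : HasFDerivAt f (fderiv ℝ f p) (p.1, p.2) := by
    rw [Prod.mk.eta]; exact hf.hasFDerivAt
  exact hf'.comp_hasDerivAt p.2 h

/-- eventual membership of the horizontal slice in `Uop` -/
lemma slice1_mem {p : ℝ × ℝ} (hp : p ∈ Uop) :
    ∀ᶠ x in nhds p.1, (x, p.2) ∈ Uop := by
  have : ContinuousAt (fun x : ℝ => (x, p.2)) p.1 := by fun_prop
  have h := this.preimage_mem_nhds (isOpen_Uop.mem_nhds (by simpa using hp))
  exact h

lemma slice2_mem {p : ℝ × ℝ} (hp : p ∈ Uop) :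
    ∀ᶠ y in nhds p.2, (p.1, y) ∈ Uop := by
  have : ContinuousAt (fun y : ℝ => (p.1, y)) p.2 := by fun_prop
  exact this.preimage_mem_nhds (isOpen_Uop.mem_nhds (by simpa using hp))

lemma pdr_eqOn {f : ℝ × ℝ → ℝ} (hf : ContDiffOn ℝ 1 f Uop) :
    EqOn (pdr f) (g1 f) Uop := fun p hp =>
  (hasDerivAt_slice1 (diffAt_of_cd1 hf hp)).deriv

lemma pdz_eqOn {f : ℝ × ℝ → ℝ} (hf : ContDiffOn ℝ 1 f Uop) :
    EqOn (pdz f) (g2 f) Uop := fun p hp =>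
  (hasDerivAt_slice2 (diffAt_of_cd1 hf hp)).deriv

/-- derivative of a horizontal slice of a function that agrees on `Uop` with a C¹ fn -/
lemma hasDerivAt_slice1_congr {A g : ℝ × ℝ → ℝ} (hg : ContDiffOn ℝ 1 g Uop)
    (hAg : EqOn A g Uop) {p : ℝ × ℝ} (hp : p ∈ Uop) :
    HasDerivAt (fun x => A (x, p.2)) (g1 g p) p.1 := by
  refine (hasDerivAt_slice1 (diffAt_of_cd1 hg hp)).congr_of_eventuallyEq ?_
  filter_upwards [slice1_mem hp] with x hx using hAg hx

lemma hasDerivAt_slice2_congr {A g : ℝ × ℝ → ℝ} (hg : ContDiffOn ℝ 1 g Uop)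
    (hAg : EqOn A g Uop) {p : ℝ × ℝ} (hp : p ∈ Uop) :
    HasDerivAt (fun y => A (p.1, y)) (g2 g p) p.2 := by
  refine (hasDerivAt_slice2 (diffAt_of_cd1 hg hp)).congr_of_eventuallyEq ?_
  filter_upwards [slice2_mem hp] with y hy using hAg hy

lemma pdr_eqOn_congr {A g : ℝ × ℝ → ℝ} (hg : ContDiffOn ℝ 1 g Uop)
    (hAg : EqOn A g Uop) : EqOn (pdr A) (g1 g) Uop := fun p hp =>
  (hasDerivAt_slice1_congr hg hAg hp).deriv

lemma pdz_eqOn_congr {A g : ℝ × ℝ → ℝ} (hg : ContDiffOn ℝ 1 g Uop)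
    (hAg : EqOn A g Uop) : EqOn (pdz A) (g2 g) Uop := fun p hp =>
  (hasDerivAt_slice2_congr hg hAg hp).deriv

section Second
variable {f : ℝ × ℝ → ℝ} (hf : ContDiffOn ℝ 2 f Uop)
include hf

lemma pdrpdr_eq {p : ℝ × ℝ} (hp : p ∈ Uop) : pdr (pdr f) p = g1 (g1 f) p :=
  pdr_eqOn_congr (contDiffOn_g1 hf) (pdr_eqOn (hf.of_le one_le_two)) hp

lemma pdzpdz_eq {p : ℝ × ℝ} (hp : p ∈ Uop) : pdz (pdz f) p = g2 (g2 f) p :=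
  pdz_eqOn_congr (contDiffOn_g2 hf) (pdz_eqOn (hf.of_le one_le_two)) hp

lemma pdrpdz_eq {p : ℝ × ℝ} (hp : p ∈ Uop) : pdr (pdz f) p = g1 (g2 f) p :=
  pdr_eqOn_congr (contDiffOn_g2 hf) (pdz_eqOn (hf.of_le one_le_two)) hp

lemma pdzpdr_eq {p : ℝ × ℝ} (hp : p ∈ Uop) : pdz (pdr f) p = g2 (g1 f) p :=
  pdz_eqOn_congr (contDiffOn_g1 hf) (pdr_eqOn (hf.of_le one_le_two)) hp

lemma pd_symm {p : ℝ × ℝ} (hp : p ∈ Uop) : pdz (pdr f) p = pdr (pdz f) p := by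
  rw [pdzpdr_eq hf hp, pdrpdz_eq hf hp]; exact symm_g hf hp

lemma hasDerivAt_pdr1 {p : ℝ × ℝ} (hp : p ∈ Uop) :
    HasDerivAt (fun x => pdr f (x, p.2)) (pdr (pdr f) p) p.1 := by
  rw [pdrpdr_eq hf hp]
  exact hasDerivAt_slice1_congr (contDiffOn_g1 hf) (pdr_eqOn (hf.of_le one_le_two)) hp

lemma hasDerivAt_pdz1 {p : ℝ × ℝ} (hp : p ∈ Uop) :
    HasDerivAt (fun x => pdz f (x, p.2)) (pdr (pdz f) p) p.1 := by
  rw [pdrpdz_eq hf hp]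
  exact hasDerivAt_slice1_congr (contDiffOn_g2 hf) (pdz_eqOn (hf.of_le one_le_two)) hp

lemma hasDerivAt_pdz2 {p : ℝ × ℝ} (hp : p ∈ Uop) :
    HasDerivAt (fun y => pdz f (p.1, y)) (pdz (pdz f) p) p.2 := by
  rw [pdzpdz_eq hf hp]
  exact hasDerivAt_slice2_congr (contDiffOn_g2 hf) (pdz_eqOn (hf.of_le one_le_two)) hp

lemma hasDerivAt_pdr2 {p : ℝ × ℝ} (hp : p ∈ Uop) :
    HasDerivAt (fun y => pdr f (p.1, y)) (pdz (pdr f) p) p.2 := by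
  rw [pdzpdr_eq hf hp]
  exact hasDerivAt_slice2_congr (contDiffOn_g1 hf) (pdr_eqOn (hf.of_le one_le_two)) hp

lemma hasDerivAt_f1 {p : ℝ × ℝ} (hp : p ∈ Uop) :
    HasDerivAt (fun x => f (x, p.2)) (pdr f p) p.1 := by
  rw [pdr_eqOn (hf.of_le one_le_two) hp]
  exact hasDerivAt_slice1 (diffAt_of_cd1 (hf.of_le one_le_two) hp)

lemma hasDerivAt_f2 {p : ℝ × ℝ} (hp : p ∈ Uop) :
    HasDerivAt (fun y => f (p.1, y)) (pdz f p) p.2 := by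
  rw [pdz_eqOn (hf.of_le one_le_two) hp]
  exact hasDerivAt_slice2 (diffAt_of_cd1 (hf.of_le one_le_two) hp)

lemma continuousOn_pdr : ContinuousOn (pdr f) Uop :=
  (continuousOn_g1 (hf.of_le one_le_two)).congr (pdr_eqOn (hf.of_le one_le_two))

lemma continuousOn_pdz : ContinuousOn (pdz f) Uop :=
  (continuousOn_g2 (hf.of_le one_le_two)).congr (pdz_eqOn (hf.of_le one_le_two))

lemma continuousOn_pdrpdr : ContinuousOn (pdr (pdr f)) Uop :=
  (continuousOn_g1 (contDiffOn_g1 hf)).congr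
    (pdr_eqOn_congr (contDiffOn_g1 hf) (pdr_eqOn (hf.of_le one_le_two)))

lemma continuousOn_pdrpdz : ContinuousOn (pdr (pdz f)) Uop :=
  (continuousOn_g1 (contDiffOn_g2 hf)).congr
    (pdr_eqOn_congr (contDiffOn_g2 hf) (pdz_eqOn (hf.of_le one_le_two)))

lemma continuousOn_pdzpdz : ContinuousOn (pdz (pdz f)) Uop :=
  (continuousOn_g2 (contDiffOn_g2 hf)).congr
    (pdz_eqOn_congr (contDiffOn_g2 hf) (pdz_eqOn (hf.of_le one_le_two)))

lemma continuousOn_pdzpdr : ContinuousOn (pdz (pdr f)) Uop :=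
  (continuousOn_g2 (contDiffOn_g1 hf)).congr
    (pdz_eqOn_congr (contDiffOn_g1 hf) (pdr_eqOn (hf.of_le one_le_two)))

end Second

/-- the Mass formula. For a periodic solution of the reduced vacuum
Einstein equations with angular-velocity potential Ω satisfying the quadratures,
the Komar mass M(ρ) = (1/4)∫_{−L/2}^{L/2}(−ρσ_ρ + Ω ω_z) dz is independent of ρ. -/
theorem mass_formula
    (L J_T : ℝ) (hL : 0 < L)
    (σ ω Ω : ℝ × ℝ → ℝ)
    (hσ : ContDiffOn ℝ 2 σ {p : ℝ × ℝ | 0 < p.1})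
    (hω : ContDiffOn ℝ 2 ω {p : ℝ × ℝ | 0 < p.1})
    (hΩ : ContDiffOn ℝ 2 Ω {p : ℝ × ℝ | 0 < p.1})
    (hσper : ∀ p : ℝ × ℝ, 0 < p.1 → σ (p.1, p.2 + L) = σ p)
    (hΩper : ∀ p : ℝ × ℝ, 0 < p.1 → Ω (p.1, p.2 + L) = Ω p)
    (hωper : ∀ p : ℝ × ℝ, 0 < p.1 → ω (p.1, p.2 + L) = ω p + 8 * J_T)
    (heqσ : ∀ p : ℝ × ℝ, 0 < p.1 → lap σ p =
      - Real.exp (-2 * σ p) * ((pdr ω p) ^ 2 + (pdz ω p) ^ 2) / p.1 ^ 4)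
    (heqω : ∀ p : ℝ × ℝ, 0 < p.1 → lap ω p =
      4 * pdr ω p / p.1 + 2 * (pdr ω p * pdr σ p + pdz ω p * pdz σ p))
    (η : ℝ × ℝ → ℝ)
    (hη : ∀ p, η p = p.1 ^ 2 * Real.exp (σ p))
    (hΩz : ∀ p : ℝ × ℝ, 0 < p.1 → pdz Ω p = p.1 * pdr ω p / (η p) ^ 2)
    (hΩr : ∀ p : ℝ × ℝ, 0 < p.1 → pdr Ω p = - p.1 * pdz ω p / (η p) ^ 2) :
    ∀ r : ℝ, 0 < r →
      deriv (fun s : ℝ =>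
        (1 / 4) * ∫ z in (-L / 2)..(L / 2),
          (- s * pdr σ (s, z) + Ω (s, z) * pdz ω (s, z))) r = 0 := by
  intro r hr
  have hσ' : ContDiffOn ℝ 2 σ Uop := hσ
  have hω' : ContDiffOn ℝ 2 ω Uop := hω
  have hΩ' : ContDiffOn ℝ 2 Ω Uop := hΩ
  have hmem : ∀ {s z : ℝ}, 0 < s → ((s, z) : ℝ × ℝ) ∈ Uop := fun {s z} hs => hs
  set a : ℝ := -L / 2 with ha
  set b : ℝ := L / 2 with hb
  have hab : a < b := by simp only [ha, hb]; linarith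
  -- joint integrand of the derivative
  set Φ : ℝ × ℝ → ℝ := fun p =>
    -pdr σ p - p.1 * pdr (pdr σ) p + (pdr Ω p * pdz ω p + Ω p * pdr (pdz ω) p) with hΦdef
  have hΦcont : ContinuousOn Φ Uop := by
    apply ContinuousOn.add
    · exact ((continuousOn_pdr hσ').neg).sub
        (continuousOn_fst.mul (continuousOn_pdrpdr hσ'))
    · exact ((continuousOn_pdr hΩ').mul (continuousOn_pdz hω')).add
        ((hΩ'.continuousOn).mul (continuousOn_pdrpdz hω'))
  -- pointwise derivative in the ρ-direction
  have hdiff : ∀ (z x : ℝ), 0 < x →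
      HasDerivAt (fun x' => -x' * pdr σ (x', z) + Ω (x', z) * pdz ω (x', z)) (Φ (x, z)) x := by
    intro z x hx
    have h1 : HasDerivAt (fun x' => pdr σ (x', z)) (pdr (pdr σ) (x, z)) x :=
      hasDerivAt_pdr1 hσ' (hmem hx)
    have h2 : HasDerivAt (fun x' => Ω (x', z)) (pdr Ω (x, z)) x :=
      hasDerivAt_f1 hΩ' (hmem hx)
    have h3 : HasDerivAt (fun x' => pdz ω (x', z)) (pdr (pdz ω) (x, z)) x :=
      hasDerivAt_pdz1 hω' (hmem hx)
    have h0 : HasDerivAt (fun x' : ℝ => -x') (-1 : ℝ) x := (hasDerivAt_id x).neg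
    have := (h0.mul h1).add (h2.mul h3)
    exact this.congr_deriv (by simp only [hΦdef]; ring)
  -- continuity of vertical slices
  have hslice : ∀ (A : ℝ × ℝ → ℝ), ContinuousOn A Uop → ∀ x : ℝ, 0 < x →
      Continuous (fun z => A (x, z)) := by
    intro A hA x hx
    exact hA.comp_continuous (by fun_prop) (fun z => hmem hx)
  have hFcont : ∀ x : ℝ, 0 < x →
      Continuous (fun z => -x * pdr σ (x, z) + Ω (x, z) * pdz ω (x, z)) := by
    intro x hx
    exact ((continuous_const.mul (hslice _ (continuousOn_pdr hσ') x hx)).add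
      ((hslice _ (hΩ'.continuousOn) x hx).mul (hslice _ (continuousOn_pdz hω') x hx)))
  have hΦslice : Continuous (fun z => Φ (r, z)) := hslice _ hΦcont r hr
  -- the compact box and the bound
  obtain ⟨C, hC⟩ := ((isCompact_Icc.prod isCompact_Icc :
      IsCompact ((Set.Icc (r/2) (3*r/2)) ×ˢ (Set.Icc a b)))).exists_bound_of_continuousOn
    (hΦcont.mono (fun p hp => lt_of_lt_of_le (by positivity) hp.1.1))
  -- differentiation under the integral sign
  have key := intervalIntegral.hasDerivAt_integral_of_dominated_loc_of_deriv_le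
    (F := fun s z => -s * pdr σ (s, z) + Ω (s, z) * pdz ω (s, z))
    (F' := fun s z => Φ (s, z)) (a := a) (b := b) (x₀ := r)
    (bound := fun _ => |C|) (μ := MeasureTheory.volume) (s := Metric.ball r (r/2)) (Metric.ball_mem_nhds r (half_pos hr))
    ?_ ?_ ?_ ?_ ?_ ?_
  · -- conclude
    have hd := key.2
    -- the integrand of the derivative is a perfect z-derivative of a periodic function
    set G : ℝ → ℝ := fun z => r * pdz σ (r, z) + Ω (r, z) * pdr ω (r, z) with hGdef
    have hkey : ∀ z : ℝ, Φ (r, z) =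
        r * pdz (pdz σ) (r, z) +
          (pdz Ω (r, z) * pdr ω (r, z) + Ω (r, z) * pdz (pdr ω) (r, z)) := by
      intro z
      have hp : ((r, z) : ℝ × ℝ) ∈ Uop := hmem hr
      have hsym := pd_symm hω' hp
      have hσe := heqσ (r, z) hr
      simp only [lap] at hσe
      have hΩz' := hΩz (r, z) hr
      have hΩr' := hΩr (r, z) hr
      rw [hη] at hΩz' hΩr'
      have hE : Real.exp (σ (r, z)) ≠ 0 := Real.exp_ne_zero _
      have hX : Real.exp (-2 * σ (r, z)) * Real.exp (σ (r, z)) ^ 2 = 1 := by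
        rw [sq, ← Real.exp_add, ← Real.exp_add,
          show -2 * σ (r, z) + (σ (r, z) + σ (r, z)) = 0 by ring, Real.exp_zero]
      have hXinv : Real.exp (-2 * σ (r, z)) = (Real.exp (σ (r, z)) ^ 2)⁻¹ :=
        eq_inv_of_mul_eq_one_left (by linarith [hX] )
      rw [hXinv] at hσe
      have hd2 : pdz (pdz σ) (r, z) = -pdr (pdr σ) (r, z) - pdr σ (r, z) / r
          - (Real.exp (σ (r, z)) ^ 2)⁻¹ * ((pdr ω (r, z)) ^ 2 + (pdz ω (r, z)) ^ 2) / r ^ 4 := by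
        field_simp at hσe ⊢
        linarith [hσe]
      simp only [hΦdef]
      rw [hsym, hΩz', hΩr', hd2]
      field_simp
      ring
    have hGder : ∀ z : ℝ, HasDerivAt G (Φ (r, z)) z := by
      intro z
      have hp : ((r, z) : ℝ × ℝ) ∈ Uop := hmem hr
      have h1 := (hasDerivAt_pdz2 hσ' hp).const_mul r
      have h2 := hasDerivAt_f2 hΩ' hp
      have h3 := hasDerivAt_pdr2 hω' hp
      have comb := h1.add (h2.mul h3)
      rw [hkey z]
      exact comb
    have hFTC : (∫ z in a..b, Φ (r, z)) = G b - G a :=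
      intervalIntegral.integral_eq_sub_of_hasDerivAt (fun z _ => hGder z)
        (hΦslice.intervalIntegrable a b)
    -- periodicity
    have hba : b = a + L := by rw [ha, hb]; ring
    have hσz : pdz σ (r, a + L) = pdz σ (r, a) := by
      have hfun : (fun t => σ (r, t + L)) = fun t => σ (r, t) :=
        funext fun t => hσper (r, t) hr
      calc pdz σ (r, a + L) = deriv (fun t => σ (r, t)) (a + L) := rfl
        _ = deriv (fun t => σ (r, t + L)) a := (deriv_comp_add_const _ _ _).symm
        _ = deriv (fun t => σ (r, t)) a := by rw [hfun]
        _ = pdz σ (r, a) := rfl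
    have hωr : pdr ω (r, a + L) = pdr ω (r, a) := by
      have hev : (fun x => ω (x, a + L)) =ᶠ[nhds r] fun x => ω (x, a) + 8 * J_T := by
        filter_upwards [eventually_gt_nhds hr] with x hx using hωper (x, a) hx
      calc pdr ω (r, a + L) = deriv (fun x => ω (x, a + L)) r := rfl
        _ = deriv (fun x => ω (x, a) + 8 * J_T) r := hev.deriv_eq
        _ = deriv (fun x => ω (x, a)) r := deriv_add_const _
        _ = pdr ω (r, a) := rfl
    have hΩp : Ω (r, a + L) = Ω (r, a) := hΩper (r, a) hr
    have hG0 : G b - G a = 0 := by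
      rw [hba]
      simp only [hGdef, hσz, hωr, hΩp, sub_self]
    have hI : (∫ z in a..b, Φ (r, z)) = 0 := by rw [hFTC, hG0]
    have hfinal := (hd.const_mul ((1:ℝ)/4)).deriv
    rw [hfinal, hI, mul_zero]
  · filter_upwards [eventually_gt_nhds hr] with x hx
    exact (hFcont x hx).aestronglyMeasurable
  · exact (hFcont r hr).intervalIntegrable a b
  · exact hΦslice.aestronglyMeasurable
  · refine Filter.Eventually.of_forall (fun t ht x hx => ?_)
    have hx1 : r/2 ≤ x ∧ x ≤ 3*r/2 := by
      rw [Metric.mem_ball, Real.dist_eq, abs_lt] at hx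
      constructor <;> linarith [hx.1, hx.2]
    have ht' : t ∈ Set.Icc a b := by
      rw [Set.uIoc_of_le hab.le] at ht
      exact ⟨ht.1.le, ht.2⟩
    exact (hC (x, t) ⟨⟨hx1.1, hx1.2⟩, ht'⟩).trans (le_abs_self C)
  · exact intervalIntegrable_const
  · refine Filter.Eventually.of_forall (fun t ht x hx => ?_)
    have hx0 : 0 < x := by
      rw [Metric.mem_ball, Real.dist_eq, abs_lt] at hx
      linarith [hx.1]
    exact hdiff t x hx0
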